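/- If G is a finite simple 2P_3-free graph, M is an acyclic matching in G, and T is a connected component of G(M) that is not isomorphic to K_2 and in which a longest path has exactly 4 vertices, then T is isomorphic to the path P_4 on four vertices. -/

import Mathlib

open SimpleGraph

section helpers
variable {V : Type*}

lemma reach_induce_supp {G' : SimpleGraph V} (c : G'.ConnectedComponent)
    {a b : V} (q : G'.Walk a b) (ha : a ∈ c.supp) (hb : b ∈ c.supp) :
    (G'.induce c.supp).Reachable ⟨a, ha⟩ ⟨b, hb⟩ := by
  induction q with
  | nil => exact Reachable.refl _
  | @cons a x b h q ih =>
    have hx : x ∈ c.supp := by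
      rw [ConnectedComponent.mem_supp_iff] at ha ⊢
      rw [← ha]
      exact ConnectedComponent.sound h.symm.reachable
    have hadj : (G'.induce c.supp).Adj ⟨a, ha⟩ ⟨x, hx⟩ := by simpa using h
    exact hadj.reachable.trans (ih hx hb)

lemma walk_closed {H : SimpleGraph V} (S : Set V)
    (hS : ∀ a ∈ S, ∀ b, H.Adj a b → b ∈ S) :
    ∀ {a b : V} (_ : H.Walk a b), a ∈ S → b ∈ S := by
  intro a b q
  induction q with
  | nil => exact id
  | cons h q ih => exact fun ha => ih (hS _ ha _ h)

lemma acyclic_no_tri {H : SimpleGraph V} (hac : H.IsAcyclic)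
    {a b c : V} (hab : H.Adj a b) (hbc : H.Adj b c) (hac' : H.Adj a c) : False := by
  have hne : a ≠ c := hac'.ne
  have h1 : (⟨Walk.cons hac' Walk.nil, by simp [Walk.isPath_def, hne]⟩ : H.Path a c) =
      ⟨Walk.cons hab (Walk.cons hbc Walk.nil),
        by simp [Walk.isPath_def, hab.ne, hbc.ne, hne]⟩ :=
    hac.path_unique _ _
  simpa using congrArg (fun q : H.Path a c => q.1.length) h1

lemma acyclic_no_c4 {H : SimpleGraph V} (hac : H.IsAcyclic)
    {a b c d : V} (hab : H.Adj a b) (hbc : H.Adj b c) (hcd : H.Adj c d)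
    (had : H.Adj a d) (hacd : a ≠ c) (hbd : b ≠ d) : False := by
  have h1 : (⟨Walk.cons had Walk.nil, by simp [Walk.isPath_def, had.ne]⟩ : H.Path a d) =
      ⟨Walk.cons hab (Walk.cons hbc (Walk.cons hcd Walk.nil)),
        by simp [Walk.isPath_def, hab.ne, hbc.ne, hcd.ne, had.ne, hacd, hbd]⟩ :=
    hac.path_unique _ _
  simpa using congrArg (fun q : H.Path a d => q.1.length) h1

end helpers


/-- A graph `G` is *2P₃-free* if it contains no induced subgraph isomorphic to the
disjoint union of two paths on three vertices.  (Graph embeddings `↪g` are exactly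
induced-subgraph copies.) -/
def TwoP3Free {V : Type*} (G : SimpleGraph V) : Prop :=
  IsEmpty ((pathGraph 3 ⊕g pathGraph 3) ↪g G)

/-- If `G` is a finite simple `2P₃`-free graph, `M` is an acyclic
matching in `G`, and `T` is a connected component of `G(M)` that is not isomorphic
to `K₂` and in which a longest path has exactly `4` vertices (there is a path on `4`
vertices, i.e. of length `3`, and every path has length at most `3`), then `T` is
isomorphic to the path `P₄` on four vertices. -/
theorem twoP3Free_acyclicMatching_longest_path_four {V : Type*} [Fintype V]
    (G : SimpleGraph V) (hfree : TwoP3Free G) (M : G.Subgraph) (hM : M.IsMatching)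
    (hac : (G.induce M.verts).IsAcyclic)
    (c : (G.induce M.verts).ConnectedComponent)
    (hc : ¬ Nonempty (((G.induce M.verts).induce c.supp) ≃g (⊤ : SimpleGraph (Fin 2))))
    (hlong : ∃ (u v : c.supp) (p : ((G.induce M.verts).induce c.supp).Walk u v),
        p.IsPath ∧ p.length = 3)
    (hmax : ∀ (u v : c.supp) (p : ((G.induce M.verts).induce c.supp).Walk u v),
        p.IsPath → p.length ≤ 3) :
    Nonempty (((G.induce M.verts).induce c.supp) ≃g pathGraph 4) := by
  classical
  set H := (G.induce M.verts).induce c.supp with hHdef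
  have hacH : H.IsAcyclic := by
    intro w q hq
    exact hac _ (hq.map (f := (Embedding.induce c.supp).toHom) Subtype.val_injective)
  obtain ⟨u, v, p, hp, hlen⟩ := hlong
  cases p with
  | nil => simp at hlen
  | @cons _ x1 _ h01 q =>
  cases q with
  | nil => simp at hlen
  | @cons _ x2 _ h12 r =>
  cases r with
  | nil => simp at hlen
  | @cons _ x3 _ h23 s =>
  cases s with
  | @cons _ x4 _ h34 t => simp at hlen
  | nil =>
  simp only [Walk.isPath_def, Walk.support_cons, Walk.support_nil, List.nodup_cons,
    List.mem_cons, List.mem_singleton, List.not_mem_nil, or_false] at hp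
  push_neg at hp
  obtain ⟨⟨ne01, ne02, ne03⟩, ⟨ne12, ne13⟩, ne23, -⟩ := hp
  -- no path of length 4
  have contra4 : ∀ {a b c' d e : c.supp}, H.Adj a b → H.Adj b c' → H.Adj c' d →
      H.Adj d e → a ≠ c' → a ≠ d → a ≠ e → b ≠ d → b ≠ e → c' ≠ e → False := by
    intro a b c' d e h1 h2 h3 h4 nac nad nae nbd nbe nce
    have := hmax a e (Walk.cons h1 (Walk.cons h2 (Walk.cons h3 (Walk.cons h4 Walk.nil))))
      (by simp [Walk.isPath_def, h1.ne, h2.ne, h3.ne, h4.ne, nac, nad, nae, nbd, nbe, nce])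
    simp at this
  -- unique matching partner
  have Muniq : ∀ {a b b' : V}, M.Adj a b → M.Adj a b' → b = b' := by
    intro a b b' hb hb'
    obtain ⟨z, -, hz⟩ := hM (M.edge_vert hb)
    rw [hz b hb, hz b' hb']
  -- every vertex of the component has an H-neighbor matched to it
  have partner : ∀ w : c.supp, ∃ z : c.supp, H.Adj w z ∧ M.Adj ((w : M.verts) : V) ((z : M.verts) : V) := by
    intro w
    obtain ⟨z, hz, -⟩ := hM (w : M.verts).property
    have hzM : z ∈ M.verts := M.edge_vert (M.adj_symm hz)
    have hadjG' : (G.induce M.verts).Adj (w : M.verts) ⟨z, hzM⟩ := by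
      simpa using hz.adj_sub
    have hzc : (⟨z, hzM⟩ : M.verts) ∈ c.supp := by
      have hw := (w : M.verts).property
      rw [ConnectedComponent.mem_supp_iff, ← (w : c.supp).property]
      exact (ConnectedComponent.sound hadjG'.symm.reachable)
    refine ⟨⟨⟨z, hzM⟩, hzc⟩, ?_, hz⟩
    exact hadjG'
  -- the end vertices have unique neighbors
  have hN0 : ∀ y, H.Adj u y → y = x1 := by
    intro y hy
    by_contra hne
    have hy2 : y ≠ x2 := fun h => acyclic_no_tri hacH h01 h12 (h ▸ hy)
    have hy3 : y ≠ v := fun h => acyclic_no_c4 hacH h01 h12 h23 (h ▸ hy) ne02 ne13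
    exact contra4 hy.symm h01 h12 h23 hne hy2 hy3 ne02 ne03 ne13
  have hN3 : ∀ y, H.Adj v y → y = x2 := by
    intro y hy
    by_contra hne
    have hy1 : y ≠ x1 := fun h => acyclic_no_tri hacH h12 h23 (h ▸ hy).symm
    have hyu : y ≠ u := fun h => acyclic_no_c4 hacH h01 h12 h23 (h ▸ hy).symm ne02 ne13
    exact contra4 h01 h12 h23 hy ne02 ne03 (Ne.symm hyu) ne13 (Ne.symm hy1) (Ne.symm hne)
  -- matching edges at the ends
  have hM0 : M.Adj ((u : M.verts) : V) ((x1 : M.verts) : V) := by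
    obtain ⟨z, hz, hMz⟩ := partner u
    rwa [hN0 z hz] at hMz
  have hM3 : M.Adj ((v : M.verts) : V) ((x2 : M.verts) : V) := by
    obtain ⟨z, hz, hMz⟩ := partner v
    rwa [hN3 z hz] at hMz
  have coe_inj : ∀ {a b : c.supp}, ((a : M.verts) : V) = ((b : M.verts) : V) → a = b :=
    fun h => Subtype.ext (Subtype.ext h)
  -- middle vertices have no other neighbors
  have hN1 : ∀ y, H.Adj x1 y → y = u ∨ y = x2 := by
    intro y hy
    by_contra hne
    push_neg at hne
    obtain ⟨hyu, hy2⟩ := hne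
    have hy3 : y ≠ v := fun h => acyclic_no_tri hacH h12 h23 (h ▸ hy)
    obtain ⟨z, hz, hMz⟩ := partner y
    have hzu : z ≠ u := fun h => hy.ne' (coe_inj (Muniq (M.adj_symm (h ▸ hMz)) hM0))
    have hz1 : z ≠ x1 := fun h => hyu (coe_inj (Muniq (M.adj_symm (h ▸ hMz)) (M.adj_symm hM0)))
    have hz2 : z ≠ x2 := fun h => hy3 (coe_inj (Muniq (M.adj_symm (h ▸ hMz)) (M.adj_symm hM3)))
    have hz3 : z ≠ v := fun h => hy2 (coe_inj (Muniq (M.adj_symm (h ▸ hMz)) hM3))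
    exact contra4 hz.symm hy.symm h12 h23 hz1 hz2 hz3 hy2 hy3 ne13
  have hN2 : ∀ y, H.Adj x2 y → y = x1 ∨ y = v := by
    intro y hy
    by_contra hne
    push_neg at hne
    obtain ⟨hy1, hyv⟩ := hne
    have hyu : y ≠ u := fun h => acyclic_no_tri hacH h01 h12 (h ▸ hy).symm
    obtain ⟨z, hz, hMz⟩ := partner y
    have hzu : z ≠ u := fun h => hy1 (coe_inj (Muniq (M.adj_symm (h ▸ hMz)) hM0))
    have hz1 : z ≠ x1 := fun h => hyu (coe_inj (Muniq (M.adj_symm (h ▸ hMz)) (M.adj_symm hM0)))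
    have hz2 : z ≠ x2 := fun h => hyv (coe_inj (Muniq (M.adj_symm (h ▸ hMz)) (M.adj_symm hM3)))
    have hzv : z ≠ v := fun h => hy.ne' (coe_inj (Muniq (M.adj_symm (h ▸ hMz)) hM3))
    exact contra4 h01 h12 hy hz ne02 (Ne.symm hyu) (Ne.symm hzu) (Ne.symm hy1) (Ne.symm hz1)
      (Ne.symm hz2)
  -- every vertex is one of the four
  have cover : ∀ w : c.supp, w = u ∨ w = x1 ∨ w = x2 ∨ w = v := by
    intro w
    have hclosed : ∀ a ∈ ({u, x1, x2, v} : Set c.supp), ∀ b, H.Adj a b →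
        b ∈ ({u, x1, x2, v} : Set c.supp) := by
      intro a ha b hb
      simp only [Set.mem_insert_iff, Set.mem_singleton_iff] at ha ⊢
      rcases ha with rfl | rfl | rfl | rfl
      · exact Or.inr (Or.inl (hN0 b hb))
      · rcases hN1 b hb with h | h
        · exact Or.inl h
        · exact Or.inr (Or.inr (Or.inl h))
      · rcases hN2 b hb with h | h
        · exact Or.inr (Or.inl h)
        · exact Or.inr (Or.inr (Or.inr h))
      · exact Or.inr (Or.inr (Or.inl (hN3 b hb)))
    have hmk : (G.induce M.verts).connectedComponentMk (u : M.verts) =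
        (G.induce M.verts).connectedComponentMk (w : M.verts) := by
      rw [(ConnectedComponent.mem_supp_iff _ _).mp u.property,
        (ConnectedComponent.mem_supp_iff _ _).mp w.property]
    have hreach : H.Reachable u w := by
      have := reach_induce_supp c (ConnectedComponent.exact hmk).some u.property w.property
      exact this
    have := walk_closed _ hclosed hreach.some (by simp : u ∈ ({u, x1, x2, v} : Set c.supp))
    simpa using this
  -- non-adjacencies
  have hn02 : ¬ H.Adj u x2 := fun h => ne12 (hN0 _ h).symm
  have hn03 : ¬ H.Adj u v := fun h => ne13 (hN0 _ h).symm
  have hn13 : ¬ H.Adj x1 v := fun h => ne12 (hN3 _ h.symm)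
  have hv : ∀ i : Fin 4, (![u, x1, x2, v] : Fin 4 → c.supp) i = ![u, x1, x2, v] i := fun _ => rfl
  have hbij : Function.Bijective (![u, x1, x2, v] : Fin 4 → c.supp) := by
    constructor
    · intro i j hij
      fin_cases i <;> fin_cases j <;>
        simp only [Matrix.cons_val_zero, Matrix.cons_val_one, Matrix.head_cons,
          Matrix.cons_val_two, Matrix.tail_cons, Matrix.cons_val_three, Fin.mk_zero,
          Fin.mk_one, Matrix.cons_val_fin_one, Fin.isValue] at hij <;>
        first
          | rfl
          | exact absurd hij ne01 | exact absurd hij ne02 | exact absurd hij ne03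
          | exact absurd hij ne12 | exact absurd hij ne13 | exact absurd hij ne23
          | exact absurd hij.symm ne01 | exact absurd hij.symm ne02
          | exact absurd hij.symm ne03 | exact absurd hij.symm ne12
          | exact absurd hij.symm ne13 | exact absurd hij.symm ne23
    · intro w
      rcases cover w with rfl | rfl | rfl | rfl
      · exact ⟨0, rfl⟩
      · exact ⟨1, rfl⟩
      · exact ⟨2, rfl⟩
      · exact ⟨3, rfl⟩
  have hrel : ∀ i j : Fin 4, H.Adj (![u, x1, x2, v] i) (![u, x1, x2, v] j) ↔
      (pathGraph 4).Adj i j := by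
    intro i j
    fin_cases i <;> fin_cases j <;>
      simp only [Matrix.cons_val_zero, Matrix.cons_val_one, Matrix.head_cons,
        Matrix.cons_val_two, Matrix.tail_cons, Matrix.cons_val_three, Fin.mk_zero,
        Fin.mk_one, Matrix.cons_val_fin_one, Fin.isValue, pathGraph_adj] <;>
      constructor <;> intro hh <;>
      first
        | omega
        | exact absurd hh H.irrefl
        | exact absurd hh hn02 | exact absurd hh hn03 | exact absurd hh hn13
        | exact absurd hh.symm hn02 | exact absurd hh.symm hn03 | exact absurd hh.symm hn13
        | exact h01 | exact h12 | exact h23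
        | exact h01.symm | exact h12.symm | exact h23.symm
        | simp
  exact ⟨(RelIso.mk (Equiv.ofBijective _ hbij) (hrel _ _)).symm⟩
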